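/- Let l ≥ 4 and 1 ≤ k ≤ l−3 be integers. Let V be a real inner product space and let τ₁, …, τ_{l−1}, τ̄_{k+1} ∈ V satisfy: ⟪τ_i,τ_i⟫ = 2 for all i and ⟪τ̄_{k+1},τ̄_{k+1}⟫ = 2; ⟪τ_i,τ_{i+1}⟫ = −1 for 1 ≤ i ≤ l−2 and ⟪τ_i,τ_j⟫ = 0 for |i−j| ≥ 2; ⟪τ_k,τ̄_{k+1}⟫ = −1, ⟪τ_{k+2},τ̄_{k+1}⟫ = 1, and ⟪τ_i,τ̄_{k+1}⟫ = 0 for i ∉ {k, k+2} (the Gram relations of the Carter diagram D_l(a_k)). Set β_{k+1} := −(τ₁ + 2·(τ₂ + ⋯ + τ_k) + τ_{k+1} + τ̄_{k+1}). Then ⟪β_{k+1},β_{k+1}⟫ = 2, ⟪β_{k+1},τ₂⟫ = −1, and ⟪β_{k+1},τ_i⟫ = 0 for every i ∈ {1,…,l−1} with i ≠ 2 (the Gram relations of the Dynkin diagram D_l). -/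
import Mathlib


open scoped RealInnerProductSpace

set_option maxHeartbeats 1600000 in
theorem stmt1 {V : Type*} [NormedAddCommGroup V] [InnerProductSpace ℝ V]
    (l k : ℕ) (hl : 4 ≤ l) (hk1 : 1 ≤ k) (hk2 : k ≤ l - 3)
    (τ : ℕ → V) (τb : V)
    (hnorm : ∀ i, 1 ≤ i → i ≤ l - 1 → ⟪τ i, τ i⟫ = 2)
    (hbnorm : ⟪τb, τb⟫ = 2)
    (hadj : ∀ i, 1 ≤ i → i ≤ l - 2 → ⟪τ i, τ (i + 1)⟫ = -1)
    (hfar : ∀ i j, 1 ≤ i → i ≤ l - 1 → 1 ≤ j → j ≤ l - 1 →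
      (i + 2 ≤ j ∨ j + 2 ≤ i) → ⟪τ i, τ j⟫ = 0)
    (hbk : ⟪τ k, τb⟫ = -1)
    (hbk2 : ⟪τ (k + 2), τb⟫ = 1)
    (hb0 : ∀ i, 1 ≤ i → i ≤ l - 1 → i ≠ k → i ≠ k + 2 → ⟪τ i, τb⟫ = 0)
    (β : V)
    (hdef : β = -(τ 1 + (2 : ℝ) • ∑ i ∈ Finset.Icc 2 k, τ i + τ (k + 1) + τb)) :
    ⟪β, β⟫ = 2 ∧ ⟪β, τ 2⟫ = -1 ∧
    ∀ i, 1 ≤ i → i ≤ l - 1 → i ≠ 2 → ⟪β, τ i⟫ = 0 := by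
  -- Gram entry formula
  have hG : ∀ i j, 1 ≤ i → i ≤ l - 1 → 1 ≤ j → j ≤ l - 1 →
      ⟪τ i, τ j⟫ = (if i = j then (2:ℝ) else if i + 1 = j ∨ j + 1 = i then -1 else 0) := by
    intro i j hi1 hi2 hj1 hj2
    by_cases hij : i = j
    · rw [if_pos hij, hij]; exact hnorm j hj1 hj2
    by_cases h1 : i + 1 = j
    · rw [if_neg hij, if_pos (Or.inl h1), ← h1]
      exact hadj i hi1 (by omega)
    by_cases h2 : j + 1 = i
    · rw [if_neg hij, if_pos (Or.inr h2), real_inner_comm, ← h2]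
      exact hadj j hj1 (by omega)
    · rw [if_neg hij, if_neg (by tauto)]
      exact hfar i j hi1 hi2 hj1 hj2 (by omega)
  -- telescoping sum formula
  have hS : ∀ m, 1 ≤ m → m ≤ l - 2 → ∀ j, 1 ≤ j → j ≤ l - 1 →
      ∑ i ∈ Finset.Icc 2 m, ⟪τ i, τ j⟫ =
        (if j = 2 then (1:ℝ) else 0) - (if j = 1 then 1 else 0)
          - (if j = m + 1 then 1 else 0) + (if j = m then 1 else 0) := by
    intro m hm1
    induction m, hm1 using Nat.le_induction with
    | base =>
      intro _ j hj1 hj2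
      rw [show Finset.Icc 2 1 = (∅ : Finset ℕ) from rfl, Finset.sum_empty]
      split_ifs <;> first | norm_num | (exfalso; omega)
    | succ m hm ih =>
      intro hml j hj1 hj2
      rw [Finset.sum_Icc_succ_top (by omega : 2 ≤ m + 1),
        ih (by omega) j hj1 hj2, hG (m + 1) j (by omega) (by omega) hj1 hj2]
      split_ifs <;> first | ring1 | (exfalso; omega)
  have hτb : ∀ j, 1 ≤ j → j ≤ l - 1 →
      ⟪τ j, τb⟫ = (if j = k then (-1:ℝ) else if j = k + 2 then 1 else 0) := by
    intro j h1 h2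
    by_cases e1 : j = k
    · rw [if_pos e1, e1]; exact hbk
    by_cases e2 : j = k + 2
    · rw [if_neg e1, if_pos e2, e2]; exact hbk2
    · rw [if_neg e1, if_neg e2]; exact hb0 j h1 h2 e1 e2
  have hβ : ∀ x : V, ⟪β, x⟫ =
      -(⟪τ 1, x⟫ + 2 * ∑ i ∈ Finset.Icc 2 k, ⟪τ i, x⟫ + ⟪τ (k + 1), x⟫ + ⟪τb, x⟫) := by
    intro x
    rw [hdef, inner_neg_left, inner_add_left, inner_add_left, inner_add_left,
      real_inner_smul_left, sum_inner]
  -- main formula for ⟪β, τ j⟫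
  have key : ∀ j, 1 ≤ j → j ≤ l - 1 → ⟪β, τ j⟫ = if j = 2 then (-1:ℝ) else 0 := by
    intro j hj1 hj2
    rw [hβ, hS k hk1 (by omega) j hj1 hj2, hG 1 j (by omega) (by omega) hj1 hj2,
      hG (k + 1) j (by omega) (by omega) hj1 hj2, real_inner_comm (τ j) τb, hτb j hj1 hj2]
    split_ifs <;> first | ring1 | (exfalso; omega)
  -- ⟪β, τb⟫
  have hSb : ∑ i ∈ Finset.Icc 2 k, ⟪τ i, τb⟫ = if k = 1 then (0:ℝ) else -1 := by
    by_cases hk : k = 1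
    · rw [if_pos hk, hk, show Finset.Icc 2 1 = (∅ : Finset ℕ) from rfl, Finset.sum_empty]
    · rw [if_neg hk]
      rw [Finset.sum_eq_single_of_mem k (Finset.mem_Icc.mpr ⟨by omega, le_refl k⟩)
        (fun i hi hik => hb0 i (by have := Finset.mem_Icc.mp hi; omega)
          (by have := Finset.mem_Icc.mp hi; omega) hik
          (by have := Finset.mem_Icc.mp hi; omega))]
      exact hbk
  have keyb : ⟪β, τb⟫ = if k = 1 then (-1:ℝ) else 0 := by
    rw [hβ, hSb, hbnorm, hτb 1 le_rfl (by omega),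
      show ⟪τ (k + 1), τb⟫ = 0 from hb0 (k + 1) (by omega) (by omega) (by omega) (by omega)]
    split_ifs <;> first | ring1 | (exfalso; omega)
  have hsumβ : ∑ i ∈ Finset.Icc 2 k, ⟪τ i, β⟫ = if k = 1 then (0:ℝ) else -1 := by
    by_cases hk : k = 1
    · rw [if_pos hk, hk, show Finset.Icc 2 1 = (∅ : Finset ℕ) from rfl, Finset.sum_empty]
    · rw [if_neg hk]
      rw [Finset.sum_eq_single_of_mem 2 (Finset.mem_Icc.mpr ⟨le_refl 2, by omega⟩)
        (fun i hi hik => by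
          have := Finset.mem_Icc.mp hi
          rw [real_inner_comm, key i (by omega) (by omega), if_neg hik])]
      rw [real_inner_comm, key 2 (by omega) (by omega), if_pos rfl]
  refine ⟨?_, ?_, ?_⟩
  · rw [hβ β, real_inner_comm β (τ 1), key 1 le_rfl (by omega),
      real_inner_comm β (τ (k + 1)), key (k + 1) (by omega) (by omega),
      real_inner_comm β τb, keyb, hsumβ]
    by_cases hk : k = 1
    · rw [if_neg (by omega), if_pos hk, if_pos (by omega), if_pos hk]; ring
    · rw [if_neg (by omega), if_neg hk, if_neg (by omega), if_neg hk]; ring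
  · rw [key 2 (by omega) (by omega), if_pos rfl]
  · intro i hi1 hi2 hi3
    rw [key i hi1 hi2, if_neg hi3]
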